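/- For all x in [0,1], arcsin(x) ≤ πx/(2 + sqrt(1-x^2)). -/

import Mathlib

open Real

lemma fink_key : ∀ θ ∈ Set.Icc (0:ℝ) (π/2),
    0 ≤ π * Real.sin θ - 2*θ - θ * Real.cos θ := by
  set g : ℝ → ℝ := fun θ => π * Real.sin θ - 2*θ - θ * Real.cos θ with hg
  set g' : ℝ → ℝ := fun θ => π * Real.cos θ - 2 - (Real.cos θ - θ * Real.sin θ) with hg'
  set g'' : ℝ → ℝ := fun θ => (2 - π) * Real.sin θ + θ * Real.cos θ with hg''
  have hd1 : ∀ θ : ℝ, HasDerivAt g (g' θ) θ := by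
    intro θ
    have h1 : HasDerivAt (fun t : ℝ => π * Real.sin t) (π * Real.cos θ) θ :=
      (Real.hasDerivAt_sin θ).const_mul π
    have h2 : HasDerivAt (fun t : ℝ => 2*t) 2 θ := by
      simpa using (hasDerivAt_id θ).const_mul (2:ℝ)
    have h3 : HasDerivAt (fun t : ℝ => t * Real.cos t)
        (1 * Real.cos θ + θ * (-Real.sin θ)) θ :=
      (hasDerivAt_id θ).mul (Real.hasDerivAt_cos θ)
    have := (h1.sub h2).sub h3
    refine this.congr_deriv ?_
    simp [hg']; ring
  have hd2 : ∀ θ : ℝ, HasDerivAt g' (g'' θ) θ := by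
    intro θ
    have h1 : HasDerivAt (fun t : ℝ => π * Real.cos t) (π * (-Real.sin θ)) θ :=
      (Real.hasDerivAt_cos θ).const_mul π
    have h2 : HasDerivAt (fun t : ℝ => π * Real.cos t - 2) (π * (-Real.sin θ)) θ :=
      h1.sub_const 2
    have h3 : HasDerivAt (fun t : ℝ => t * Real.sin t)
        (1 * Real.sin θ + θ * Real.cos θ) θ :=
      (hasDerivAt_id θ).mul (Real.hasDerivAt_sin θ)
    have h4 : HasDerivAt (fun t : ℝ => Real.cos t - t * Real.sin t)
        (-Real.sin θ - (1 * Real.sin θ + θ * Real.cos θ)) θ :=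
      (Real.hasDerivAt_cos θ).sub h3
    have := h2.sub h4
    refine this.congr_deriv ?_
    simp [hg'']; ring
  have hconc : ConcaveOn ℝ (Set.Icc (0:ℝ) (π/2)) g := by
    apply concaveOn_of_hasDerivWithinAt2_nonpos (convex_Icc _ _)
    · exact (Continuous.continuousOn (by simp only [hg]; fun_prop))
    · exact fun x _ => (hd1 x).hasDerivWithinAt
    · exact fun x _ => (hd2 x).hasDerivWithinAt
    · intro x hx
      rw [interior_Icc] at hx
      obtain ⟨hx0, hx1⟩ := hx
      have hs : 0 < Real.sin x := Real.sin_pos_of_pos_of_lt_pi hx0 (by linarith [Real.pi_pos])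
      have ht : x < Real.tan x := Real.lt_tan hx0 hx1
      have hc : 0 < Real.cos x := Real.cos_pos_of_mem_Ioo ⟨by linarith, hx1⟩
      have hxc : x * Real.cos x < Real.sin x := by
        have := (lt_div_iff₀ hc).mp (by rwa [Real.tan_eq_sin_div_cos] at ht)
        linarith
      have hpi : (3:ℝ) < π := by linarith [Real.pi_gt_three]
      have : x * Real.cos x ≤ (π - 2) * Real.sin x := by nlinarith
      simp only [hg'']
      linarith
  intro θ hθ
  have hpi : (0:ℝ) < π := Real.pi_pos
  obtain ⟨h0, h1⟩ := hθ
  have hmem0 : (0:ℝ) ∈ Set.Icc (0:ℝ) (π/2) := by constructor <;> linarith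
  have hmem1 : (π/2) ∈ Set.Icc (0:ℝ) (π/2) := by constructor <;> linarith
  set a : ℝ := 1 - θ / (π/2) with ha
  set b : ℝ := θ / (π/2) with hb
  have hb0 : 0 ≤ b := div_nonneg h0 (by linarith)
  have ha0 : 0 ≤ a := by
    have : b ≤ 1 := (div_le_one (by linarith)).mpr h1
    simp [ha]; linarith
  have hab : a + b = 1 := by simp [ha]
  have := hconc.2 hmem0 hmem1 ha0 hb0 hab
  have hcomb : a • (0:ℝ) + b • (π/2) = θ := by
    rw [smul_eq_mul, smul_eq_mul, mul_zero, zero_add, hb]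
    exact div_mul_cancel₀ _ (by positivity)
  rw [hcomb] at this
  have hg0 : g 0 = 0 := by simp [hg]
  have hgh : g (π/2) = 0 := by simp [hg, Real.sin_pi_div_two, Real.cos_pi_div_two]; ring
  rw [hg0, hgh] at this
  simpa [hg] using this

theorem stmt_3 : ∀ x ∈ Set.Icc (0:ℝ) 1,
    Real.arcsin x ≤ Real.pi * x / (2 + Real.sqrt (1 - x ^ 2)) := by
  intro x hx
  obtain ⟨hx0, hx1⟩ := hx
  set θ := Real.arcsin x with hθ
  have hθ0 : 0 ≤ θ := Real.arcsin_nonneg.mpr hx0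
  have hθ1 : θ ≤ π/2 := Real.arcsin_le_pi_div_two x
  have hsin : Real.sin θ = x := Real.sin_arcsin (by linarith) hx1
  have hcos : Real.cos θ = Real.sqrt (1 - x ^ 2) := Real.cos_arcsin x
  have hkey := fink_key θ ⟨hθ0, hθ1⟩
  rw [hsin, hcos] at hkey
  have hs : 0 ≤ Real.sqrt (1 - x ^ 2) := Real.sqrt_nonneg _
  rw [le_div_iff₀ (by linarith)]
  linarith
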